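/- Let F be a field of characteristic 2 and let β be a symmetric bilinear form on a finite-dimensional F-vector space V. Then the set G_F^0(β) = {0} ∪ {c ∈ F* : β ≅ cβ} is a subfield of F containing the subfield F² = {x² : x ∈ F} of squares; moreover, if β is not hyperbolic (i.e. β(x,x) ≠ 0 for some x ∈ V), then G_F^0(β) is a finite extension of F² (i.e. finite-dimensional as an F²-vector space). -/

import Mathlib

set_option maxHeartbeats 1000000
set_option linter.unusedSectionVars false
set_option linter.unusedVariables false

open LinearMap (BilinForm)
open Module

/-- The set `G_F^0(β)` of similarity factors (together with `0`) of a bilinear form `β`. -/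
def bilinSimFactors0 {F : Type*} [Field F] {V : Type*} [AddCommGroup V] [Module F V]
    (β : LinearMap.BilinForm F V) : Set F :=
  {0} ∪ {c : F | c ≠ 0 ∧ ∃ e : V ≃ₗ[F] V, ∀ x y : V, (c • β) (e x) (e y) = β x y}

namespace Stmt3

universe uF
variable {F : Type uF} [Field F]

section Defs

variable {V V₁ V₂ V₃ : Type*} [AddCommGroup V] [Module F V]
  [AddCommGroup V₁] [Module F V₁] [AddCommGroup V₂] [Module F V₂]
  [AddCommGroup V₃] [Module F V₃]

/-- Orthogonal sum of two bilinear forms. -/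
def oplus (β₁ : BilinForm F V₁) (β₂ : BilinForm F V₂) : BilinForm F (V₁ × V₂) :=
  LinearMap.mk₂ F (fun x y => β₁ x.1 y.1 + β₂ x.2 y.2)
    (by intros; simp; ring) (by intros; simp; ring)
    (by intros; simp; ring) (by intros; simp; ring)

@[simp] lemma oplus_apply (β₁ : BilinForm F V₁) (β₂ : BilinForm F V₂) (x y : V₁ × V₂) :
    oplus β₁ β₂ x y = β₁ x.1 y.1 + β₂ x.2 y.2 := rfl

/-- The standard metabolic plane with parameter `z` : matrix `[[0,1],[1,z]]`. -/
def block1 (z : F) : BilinForm F (F × F) :=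
  LinearMap.mk₂ F (fun x y => x.1 * y.2 + x.2 * y.1 + z * x.2 * y.2)
    (by intros; simp; ring) (by intros; simp; ring)
    (by intros; simp; ring) (by intros; simp; ring)

@[simp] lemma block1_apply (z : F) (x y : F × F) :
    block1 z x y = x.1 * y.2 + x.2 * y.1 + z * x.2 * y.2 := rfl

/-- Orthogonal sum of `k` metabolic planes with parameters `z i`. -/
def blocks {k : ℕ} (z : Fin k → F) : BilinForm F (Fin k → F × F) :=
  LinearMap.mk₂ F
    (fun x y => ∑ i, ((x i).1 * (y i).2 + (x i).2 * (y i).1 + z i * (x i).2 * (y i).2))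
    (by intros; rw [← Finset.sum_add_distrib]; exact Finset.sum_congr rfl (by intros; simp; ring))
    (by intro c m n; simp only [smul_eq_mul, Finset.mul_sum, Pi.smul_apply, Prod.smul_fst,
      Prod.smul_snd, smul_eq_mul]; exact Finset.sum_congr rfl (by intros; ring))
    (by intros; rw [← Finset.sum_add_distrib]; exact Finset.sum_congr rfl (by intros; simp; ring))
    (by intro c m n; simp only [smul_eq_mul, Finset.mul_sum, Pi.smul_apply, Prod.smul_fst,
      Prod.smul_snd, smul_eq_mul]; exact Finset.sum_congr rfl (by intros; ring))

@[simp] lemma blocks_apply {k : ℕ} (z : Fin k → F) (x y : Fin k → F × F) :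
    blocks z x y = ∑ i, ((x i).1 * (y i).2 + (x i).2 * (y i).1 + z i * (x i).2 * (y i).2) := rfl

/-- Isometry of bilinear forms. -/
def Isom (β₁ : BilinForm F V₁) (β₂ : BilinForm F V₂) : Prop :=
  ∃ e : V₁ ≃ₗ[F] V₂, ∀ x y, β₂ (e x) (e y) = β₁ x y

lemma Isom.refl (β : BilinForm F V) : Isom β β := ⟨LinearEquiv.refl F V, fun _ _ => rfl⟩

lemma Isom.symm {β₁ : BilinForm F V₁} {β₂ : BilinForm F V₂} (h : Isom β₁ β₂) : Isom β₂ β₁ := by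
  obtain ⟨e, he⟩ := h
  refine ⟨e.symm, fun x y => ?_⟩
  rw [← he (e.symm x) (e.symm y)]; simp

lemma Isom.trans {β₁ : BilinForm F V₁} {β₂ : BilinForm F V₂} {β₃ : BilinForm F V₃}
    (h : Isom β₁ β₂) (h' : Isom β₂ β₃) : Isom β₁ β₃ := by
  obtain ⟨e, he⟩ := h; obtain ⟨f, hf⟩ := h'
  exact ⟨e.trans f, fun x y => by simp [hf, he]⟩

lemma isom_of_eq {β₁ β₂ : BilinForm F V₁} (h : β₁ = β₂) : Isom β₁ β₂ := h ▸ Isom.refl β₁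

lemma Isom.oplus_congr {a : BilinForm F V} {a' : BilinForm F V₁} {b : BilinForm F V₂}
    {b' : BilinForm F V₃} (ha : Isom a a') (hb : Isom b b') : Isom (oplus a b) (oplus a' b') := by
  obtain ⟨e, he⟩ := ha; obtain ⟨f, hf⟩ := hb
  exact ⟨e.prodCongr f, fun x y => by simp [he, hf]⟩

lemma isom_oplus_comm (a : BilinForm F V₁) (b : BilinForm F V₂) :
    Isom (oplus a b) (oplus b a) :=
  ⟨LinearEquiv.prodComm F V₁ V₂, fun x y => by simp [add_comm]⟩

lemma isom_oplus_assoc (a : BilinForm F V₁) (b : BilinForm F V₂) (c : BilinForm F V₃) :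
    Isom (oplus (oplus a b) c) (oplus a (oplus b c)) :=
  ⟨LinearEquiv.prodAssoc F V₁ V₂ V₃, fun x y => by simp [add_assoc]⟩

lemma Isom.smul_congr (c : F) {a : BilinForm F V₁} {b : BilinForm F V₂} (h : Isom a b) :
    Isom (c • a) (c • b) := by
  obtain ⟨e, he⟩ := h
  exact ⟨e, fun x y => by simp [he]⟩

lemma smul_oplus_eq (c : F) (a : BilinForm F V₁) (b : BilinForm F V₂) :
    c • oplus a b = oplus (c • a) (c • b) := by
  refine LinearMap.ext fun x => LinearMap.ext fun y => ?_
  simp [mul_add]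

/-- anisotropic -/
def Aniso (β : BilinForm F V) : Prop := ∀ v, β v v = 0 → v = 0

/-- the set of values represented by a form (including 0) -/
def VSet (β : BilinForm F V) : Set F := Set.range fun v => β v v

lemma Isom.vset_eq {a : BilinForm F V₁} {b : BilinForm F V₂} (h : Isom a b) :
    VSet a = VSet b := by
  obtain ⟨e, he⟩ := h
  ext x
  constructor
  · rintro ⟨v, rfl⟩; exact ⟨e v, he v v⟩
  · rintro ⟨v, rfl⟩
    exact ⟨e.symm v, by show a (e.symm v) (e.symm v) = b v v; rw [← he]; simp⟩

lemma oplus_isSymm {a : BilinForm F V₁} {b : BilinForm F V₂} (ha : a.IsSymm) (hb : b.IsSymm) :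
    (oplus a b).IsSymm := by
  refine ⟨fun x y => ?_⟩
  simp only [oplus_apply, map_add, RingHom.id_apply]
  rw [← ha.eq x.1 y.1, ← hb.eq x.2 y.2]

lemma block1_isSymm (z : F) : (block1 z).IsSymm := by
  refine ⟨fun x y => ?_⟩; simp; ring

lemma blocks_isSymm {k : ℕ} (z : Fin k → F) : (blocks z).IsSymm := by
  refine ⟨fun x y => ?_⟩
  simp only [blocks_apply, RingHom.id_apply]
  exact Finset.sum_congr rfl fun i _ => by ring

end Defs

section Moves

variable {V V₁ V₂ V₃ : Type*} [AddCommGroup V] [Module F V]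
  [AddCommGroup V₁] [Module F V₁] [AddCommGroup V₂] [Module F V₂]
  [AddCommGroup V₃] [Module F V₃]

lemma symm_eq {A : BilinForm F V₁} (hA : A.IsSymm) (x y : V₁) : A x y = A y x := by
  have := hA.eq x y; simpa using this

/-- q is additive in characteristic 2 (for symmetric forms). -/
lemma qadd [CharP F 2] {A : BilinForm F V₁} (hA : A.IsSymm) (x y : V₁) :
    A (x + y) (x + y) = A x x + A y y := by
  have h := symm_eq hA x y
  simp only [map_add, LinearMap.add_apply]
  rw [← h]
  have : A x y + A x y = 0 := CharTwo.add_self_eq_zero _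
  linear_combination this

lemma char2_eq_of_add_eq_zero [CharP F 2] {a b : F} (h : a + b = 0) : a = b := by
  linear_combination h - CharTwo.add_self_eq_zero b

lemma qsmul (A : BilinForm F V₁) (c : F) (x : V₁) : A (c • x) (c • x) = c ^ 2 * A x x := by
  simp [smul_smul]; ring

/-- zero-space glue -/
lemma isom_oplus_subsingleton_right [Subsingleton V₂] (a : BilinForm F V₁) (b : BilinForm F V₂) :
    Isom a (oplus a b) := by
  refine ⟨LinearEquiv.ofLinear (LinearMap.prod LinearMap.id 0) (LinearMap.fst F V₁ V₂) ?_ ?_,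
    fun x y => ?_⟩
  · refine LinearMap.ext fun p => ?_
    ext
    · simp
    · exact Subsingleton.elim _ _
  · refine LinearMap.ext fun p => ?_; simp
  · have hb : b 0 0 = 0 := by simp
    simp [hb]

/-- move E3: modify a block parameter by the value `A w w` of the ambient form. -/
lemma isom_m1 [CharP F 2] {A : BilinForm F V₁} (hA : A.IsSymm) (w : V₁) (y : F) :
    Isom (oplus A (block1 (y + A w w))) (oplus A (block1 y)) := by
  have hch : ∀ t : F, t + t = 0 := fun t => CharTwo.add_self_eq_zero t
  have hchV : ∀ v : V₁, v + v = 0 := fun v => by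
    rw [← two_smul F v, show (2 : F) = 0 from CharP.cast_eq_zero F 2, zero_smul]
  refine ⟨{ toFun := fun p => (p.1 + p.2.2 • w, (p.2.1 + A p.1 w, p.2.2)),
            invFun := fun p => (p.1 + p.2.2 • w, (p.2.1 + A p.1 w + p.2.2 * A w w, p.2.2)),
            map_add' := ?_, map_smul' := ?_, left_inv := ?_, right_inv := ?_ }, ?_⟩
  · intro p q
    ext
    · show (p.1 + q.1) + (p.2.2 + q.2.2) • w = (p.1 + p.2.2 • w) + (q.1 + q.2.2 • w)
      rw [add_smul]; abel
    · show (p.2.1 + q.2.1) + A (p.1 + q.1) w = (p.2.1 + A p.1 w) + (q.2.1 + A q.1 w)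
      simp only [map_add, LinearMap.add_apply]; ring
    · rfl
  · intro c p
    ext
    · show c • p.1 + (c • p.2.2) • w = c • (p.1 + p.2.2 • w)
      rw [smul_add, smul_assoc]
    · show c • p.2.1 + A (c • p.1) w = c • (p.2.1 + A p.1 w)
      simp only [map_smul, LinearMap.smul_apply, smul_eq_mul]; ring
    · rfl
  · intro p
    ext
    · show (p.1 + p.2.2 • w) + p.2.2 • w = p.1
      rw [add_assoc, hchV, add_zero]
    · show (p.2.1 + A p.1 w) + A (p.1 + p.2.2 • w) w + p.2.2 * A w w = p.2.1
      simp only [map_add, LinearMap.add_apply, map_smul, LinearMap.smul_apply, smul_eq_mul]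
      linear_combination hch (A p.1 w) + p.2.2 * hch (A w w)
    · rfl
  · intro p
    ext
    · show (p.1 + p.2.2 • w) + p.2.2 • w = p.1
      rw [add_assoc, hchV, add_zero]
    · show (p.2.1 + A p.1 w + p.2.2 * A w w) + A (p.1 + p.2.2 • w) w = p.2.1
      simp only [map_add, LinearMap.add_apply, map_smul, LinearMap.smul_apply, smul_eq_mul]
      linear_combination hch (A p.1 w) + p.2.2 * hch (A w w)
    · rfl
  · intro p q
    show A (p.1 + p.2.2 • w) (q.1 + q.2.2 • w) +
        ((p.2.1 + A p.1 w) * q.2.2 + p.2.2 * (q.2.1 + A q.1 w) + y * p.2.2 * q.2.2)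
      = A p.1 q.1 + (p.2.1 * q.2.2 + p.2.2 * q.2.1 + (y + A w w) * p.2.2 * q.2.2)
    have hs : A w q.1 = A q.1 w := symm_eq hA w q.1
    simp only [map_add, LinearMap.add_apply, map_smul, LinearMap.smul_apply, smul_eq_mul]
    rw [hs]
    linear_combination p.2.2 * hch ((A q.1) w) + q.2.2 * hch ((A p.1) w)

/-- move E4: scale a block parameter by a square. -/
lemma isom_block1_scale {l : F} (hl : l ≠ 0) (y : F) :
    Isom (block1 y) (block1 (l ^ 2 * y)) := by
  refine ⟨{ toFun := fun p => (l * p.1, l⁻¹ * p.2),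
            invFun := fun p => (l⁻¹ * p.1, l * p.2),
            map_add' := by
              intro p q; ext
              · show l * (p.1 + q.1) = l * p.1 + l * q.1; ring
              · show l⁻¹ * (p.2 + q.2) = l⁻¹ * p.2 + l⁻¹ * q.2; ring
            map_smul' := by
              intro c p; ext
              · show l * (c * p.1) = c * (l * p.1); ring
              · show l⁻¹ * (c * p.2) = c * (l⁻¹ * p.2); ring
            left_inv := by
              intro p; ext
              · show l⁻¹ * (l * p.1) = p.1; field_simp
              · show l * (l⁻¹ * p.2) = p.2; field_simp
            right_inv := by
              intro p; ext
              · show l * (l⁻¹ * p.1) = p.1; field_simp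
              · show l⁻¹ * (l * p.2) = p.2; field_simp }, fun p q => ?_⟩
  show l * p.1 * (l⁻¹ * q.2) + l⁻¹ * p.2 * (l * q.1) + l ^ 2 * y * (l⁻¹ * p.2) * (l⁻¹ * q.2)
      = p.1 * q.2 + p.2 * q.1 + y * p.2 * q.2
  field_simp

/-- move E6: a scaled sum of blocks is isometric to the sum of scaled blocks. -/
lemma isom_smul_blocks {k : ℕ} {c : F} (hc : c ≠ 0) (z : Fin k → F) :
    Isom (c • blocks z) (blocks (c • z)) := by
  refine ⟨{ toFun := fun p i => (c * (p i).1, (p i).2),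
            invFun := fun p i => (c⁻¹ * (p i).1, (p i).2),
            map_add' := by
              intro p q; funext i; ext
              · show c * ((p i).1 + (q i).1) = c * (p i).1 + c * (q i).1; ring
              · rfl
            map_smul' := by
              intro a p; funext i; ext
              · show c * (a * (p i).1) = a * (c * (p i).1); ring
              · rfl
            left_inv := by
              intro p; funext i; ext
              · show c⁻¹ * (c * (p i).1) = (p i).1; field_simp
              · rfl
            right_inv := by
              intro p; funext i; ext
              · show c * (c⁻¹ * (p i).1) = (p i).1; field_simp
              · rfl },
    fun p q => ?_⟩
  show ∑ i, (c * (p i).1 * (q i).2 + (p i).2 * (c * (q i).1) + (c • z) i * (p i).2 * (q i).2)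
      = c • ∑ i, ((p i).1 * (q i).2 + (p i).2 * (q i).1 + z i * (p i).2 * (q i).2)
  rw [smul_eq_mul, Finset.mul_sum]
  exact Finset.sum_congr rfl fun i _ => by simp [smul_eq_mul]; ring

/-- move E1: peel the front block off. -/
lemma isom_peel {k : ℕ} (A : BilinForm F V₁) (z : Fin (k+1) → F) :
    Isom (oplus A (blocks z)) (oplus (oplus A (blocks (Fin.tail z))) (block1 (z 0))) := by
  refine ⟨{ toFun := fun p => ((p.1, fun j => p.2 j.succ), p.2 0),
            invFun := fun p => (p.1.1, Fin.cons p.2 p.1.2),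
            map_add' := by intro p q; rfl,
            map_smul' := by intro c p; rfl,
            left_inv := ?_, right_inv := ?_ }, fun p q => ?_⟩
  · rintro ⟨a, p2⟩
    show (a, (Fin.cons (p2 0) (fun j => p2 j.succ) : Fin (k+1) → F × F)) = (a, p2)
    have : (Fin.cons (p2 0) (fun j => p2 j.succ) : Fin (k+1) → F × F) = p2 :=
      Fin.cons_self_tail p2
    rw [this]
  · rintro ⟨⟨a, b⟩, c⟩
    show ((a, fun (j : Fin k) => (Fin.cons c b : Fin (k+1) → F × F) j.succ),
        (Fin.cons c b : Fin (k+1) → F × F) 0) = ((a, b), c)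
    simp only [Fin.cons_succ, Fin.cons_zero]
  · show (A p.1 q.1 + ∑ j : Fin k,
        ((p.2 j.succ).1 * (q.2 j.succ).2 + (p.2 j.succ).2 * (q.2 j.succ).1
          + Fin.tail z j * (p.2 j.succ).2 * (q.2 j.succ).2))
      + ((p.2 0).1 * (q.2 0).2 + (p.2 0).2 * (q.2 0).1 + z 0 * (p.2 0).2 * (q.2 0).2)
      = A p.1 q.1 + ∑ i : Fin (k+1),
        ((p.2 i).1 * (q.2 i).2 + (p.2 i).2 * (q.2 i).1 + z i * (p.2 i).2 * (q.2 i).2)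
    rw [Fin.sum_univ_succ]
    simp only [Fin.tail]
    ring

/-- move E2: permute the blocks. -/
lemma isom_reindex {k : ℕ} (z : Fin k → F) (σ : Equiv.Perm (Fin k)) :
    Isom (blocks z) (blocks (z ∘ σ)) := by
  refine ⟨{ toFun := fun p => p ∘ σ,
            invFun := fun p => p ∘ σ.symm,
            map_add' := by intro p q; rfl,
            map_smul' := by intro c p; rfl,
            left_inv := by intro p; funext i; simp,
            right_inv := by intro p; funext i; simp }, fun p q => ?_⟩
  show ∑ j, ((p (σ j)).1 * (q (σ j)).2 + (p (σ j)).2 * (q (σ j)).1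
      + z (σ j) * (p (σ j)).2 * (q (σ j)).2)
    = ∑ i, ((p i).1 * (q i).2 + (p i).2 * (q i).1 + z i * (p i).2 * (q i).2)
  exact Equiv.sum_comp σ (fun i => (p i).1 * (q i).2 + (p i).2 * (q i).1
      + z i * (p i).2 * (q i).2)

end Moves

section Match

variable {V V₁ V₂ : Type*} [AddCommGroup V] [Module F V]
  [AddCommGroup V₁] [Module F V₁] [AddCommGroup V₂] [Module F V₂]

lemma qcore [CharP F 2] (A : BilinForm F V₁) {k : ℕ} (z : Fin k → F) (u : V₁)
    (p : Fin k → F × F) :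
    (oplus A (blocks z)) (u, p) (u, p) = A u u + ∑ i, z i * (p i).2 ^ 2 := by
  simp only [oplus_apply, blocks_apply]
  congr 1
  refine Finset.sum_congr rfl fun i _ => ?_
  have : (p i).1 * (p i).2 + (p i).2 * (p i).1 = 0 := by
    rw [mul_comm]; exact CharTwo.add_self_eq_zero _
  linear_combination this

lemma mem_vset_core [CharP F 2] (A : BilinForm F V₁) {k : ℕ} (z : Fin k → F) (u : V₁)
    (t : Fin k → F) : A u u + ∑ i, z i * t i ^ 2 ∈ VSet (oplus A (blocks z)) := by
  refine ⟨(u, fun i => (0, t i)), ?_⟩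
  show (oplus A (blocks z)) (u, _) (u, _) = _
  rw [qcore]

lemma vset_core_elim [CharP F 2] {A : BilinForm F V₁} {k : ℕ} {z : Fin k → F} {x : F}
    (h : x ∈ VSet (oplus A (blocks z))) :
    ∃ (u : V₁) (t : Fin k → F), x = A u u + ∑ i, z i * t i ^ 2 := by
  obtain ⟨⟨u, p⟩, hv⟩ := h
  refine ⟨u, fun i => (p i).2, ?_⟩
  rw [← hv]
  exact qcore A z u p

lemma mem_vset_amb [CharP F 2] (A : BilinForm F V₁) {k : ℕ} (z : Fin k → F) (u : V₁) :
    A u u ∈ VSet (oplus A (blocks z)) := by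
  have := mem_vset_core A z u 0
  simpa using this

/-- adding a zero block does not change the value set -/
lemma vset_block0 [CharP F 2] {A : BilinForm F V₁} {k : ℕ} (z : Fin k → F) :
    VSet (oplus (oplus A (blocks z)) (block1 0)) = VSet (oplus A (blocks z)) := by
  ext x
  constructor
  · rintro ⟨⟨⟨u, p⟩, b⟩, rfl⟩
    refine ⟨(u, p), ?_⟩
    show (oplus A (blocks z)) _ _ = (oplus (oplus A (blocks z)) (block1 0)) _ _
    simp only [oplus_apply, block1_apply]
    have : b.1 * b.2 + b.2 * b.1 = 0 := by rw [mul_comm]; exact CharTwo.add_self_eq_zero _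
    linear_combination -this
  · rintro ⟨v, rfl⟩
    exact ⟨(v, 0), by show (oplus (oplus A (blocks z)) (block1 0)) _ _ = _; simp⟩

/-- `SLOT`: peel off the `i`-th block. -/
lemma isom_slot [CharP F 2] (A : BilinForm F V₁) {k : ℕ} (z : Fin (k+1) → F) (i : Fin (k+1)) :
    Isom (oplus A (blocks z))
      (oplus (oplus A (blocks (Fin.tail (z ∘ Equiv.swap 0 i)))) (block1 (z i))) := by
  have h1 : Isom (oplus A (blocks z)) (oplus A (blocks (z ∘ Equiv.swap 0 i))) :=
    (Isom.refl A).oplus_congr (isom_reindex z (Equiv.swap 0 i))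
  have h2 := isom_peel A (z ∘ Equiv.swap 0 i)
  have h3 : (z ∘ Equiv.swap 0 i) 0 = z i := by simp
  rw [h3] at h2
  exact h1.trans h2

lemma cons_tail_swap_eq {k : ℕ} (z : Fin (k+1) → F) (i : Fin (k+1)) (y : F) :
    (Fin.cons y (Fin.tail (z ∘ Equiv.swap 0 i)) : Fin (k+1) → F) ∘ (Equiv.swap 0 i)
      = Function.update z i y := by
  funext j
  by_cases h : j = i
  · subst h
    show (Fin.cons y (Fin.tail (z ∘ Equiv.swap 0 j)) : Fin (k+1) → F) (Equiv.swap 0 j j) = _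
    rw [Equiv.swap_apply_right, Fin.cons_zero, Function.update_self]
  · have hσ : Equiv.swap 0 i j ≠ 0 := by
      intro h0
      apply h
      have := congrArg (Equiv.swap 0 i) h0
      rwa [Equiv.swap_apply_self, Equiv.swap_apply_left] at this
    show (Fin.cons y (Fin.tail (z ∘ Equiv.swap 0 i)) : Fin (k+1) → F) (Equiv.swap 0 i j) = _
    rw [← Fin.succ_pred (Equiv.swap 0 i j) hσ, Fin.cons_succ]
    show (z ∘ Equiv.swap 0 i) (Fin.succ _) = _
    rw [Fin.succ_pred]
    show z (Equiv.swap 0 i (Equiv.swap 0 i j)) = _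
    rw [Equiv.swap_apply_self, Function.update_of_ne h]

/-- `SLOT2`: glue a block back in at slot `i`. -/
lemma isom_slot2 [CharP F 2] (A : BilinForm F V₁) {k : ℕ} (z : Fin (k+1) → F) (i : Fin (k+1))
    (y : F) :
    Isom (oplus (oplus A (blocks (Fin.tail (z ∘ Equiv.swap 0 i)))) (block1 y))
      (oplus A (blocks (Function.update z i y))) := by
  have h2 := (isom_peel A (Fin.cons y (Fin.tail (z ∘ Equiv.swap 0 i)) : Fin (k+1) → F)).symm
  rw [Fin.tail_cons, Fin.cons_zero] at h2
  refine h2.trans ?_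
  have h1 := (Isom.refl A).oplus_congr
    (isom_reindex (Fin.cons y (Fin.tail (z ∘ Equiv.swap 0 i)) : Fin (k+1) → F)
      (Equiv.swap 0 i))
  rw [cons_tail_swap_eq] at h1
  exact h1

/-- `Reduced`: each nonzero block parameter is not a value of the form obtained by deleting it. -/
def Reduced [CharP F 2] (A : BilinForm F V₁) {k : ℕ} (z : Fin k → F) : Prop :=
  ∀ i, z i = 0 ∨ z i ∉ VSet (oplus A (blocks (Function.update z i 0)))

lemma vset_slot_aux [CharP F 2] {A : BilinForm F V₁} (hA : A.IsSymm) {k : ℕ}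
    (z : Fin (k+1) → F) (i : Fin (k+1)) :
    VSet (oplus A (blocks (Fin.tail (z ∘ Equiv.swap 0 i))))
      = VSet (oplus A (blocks (Function.update z i 0))) := by
  rw [← vset_block0 (A := A) (Fin.tail (z ∘ Equiv.swap 0 i))]
  exact (isom_slot2 A z i 0).vset_eq

/-- `REDUCE`: every list of blocks may be brought into reduced form. -/
lemma reduce [CharP F 2] {A : BilinForm F V₁} (hA : A.IsSymm) {k : ℕ} (z : Fin k → F) :
    ∃ y : Fin k → F, Reduced A y ∧ Isom (oplus A (blocks z)) (oplus A (blocks y)) := by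
  classical
  generalize hN : (Finset.univ.filter fun i => z i ≠ 0).card = N
  induction N using Nat.strong_induction_on generalizing z with
  | _ N IH =>
  by_cases hred : Reduced A z
  · exact ⟨z, hred, Isom.refl _⟩
  · simp only [Reduced, not_forall, not_or, not_not] at hred
    obtain ⟨i, hzi, hmem⟩ := hred
    -- k must be a successor since Fin k is inhabited
    rcases k with - | k
    · exact i.elim0
    -- move slot i to 0
    have hAmb : (oplus A (blocks (Fin.tail (z ∘ Equiv.swap 0 i)))).IsSymm :=
      oplus_isSymm hA (blocks_isSymm _)
    rw [← vset_slot_aux hA z i] at hmem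
    obtain ⟨w, hw⟩ := hmem
    have hw' : z i = (oplus A (blocks (Fin.tail (z ∘ Equiv.swap 0 i)))) w w := hw.symm
    -- the isometry chain z ⟿ update z i 0
    have step1 := isom_slot A z i
    have step2 : Isom
        (oplus (oplus A (blocks (Fin.tail (z ∘ Equiv.swap 0 i)))) (block1 (z i)))
        (oplus (oplus A (blocks (Fin.tail (z ∘ Equiv.swap 0 i)))) (block1 0)) := by
      have := isom_m1 hAmb w (0 : F)
      rw [zero_add, ← hw'] at this
      exact this
    have step3 := isom_slot2 A z i (0 : F)
    have hiso : Isom (oplus A (blocks z)) (oplus A (blocks (Function.update z i 0))) :=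
      (step1.trans step2).trans step3
    -- the measure decreases
    have hcard : (Finset.univ.filter fun j => Function.update z i 0 j ≠ 0).card < N := by
      rw [← hN]
      apply Finset.card_lt_card
      constructor
      · intro j hj
        simp only [Finset.mem_filter, Finset.mem_univ, true_and] at hj ⊢
        by_cases h : j = i
        · subst h; rw [Function.update_self] at hj; exact absurd rfl hj
        · rwa [Function.update_of_ne h] at hj
      · intro hsub
        have := hsub (Finset.mem_filter.mpr ⟨Finset.mem_univ i, hzi⟩)
        simp only [Finset.mem_filter, Function.update_self, ne_eq, not_true_eq_false,
          and_false] at this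
    obtain ⟨y, hy1, hy2⟩ := IH _ hcard (Function.update z i 0) rfl
    exact ⟨y, hy1, hiso.trans hy2⟩

end Match

section MatchMain

lemma mem_vset_core_self [CharP F 2] {V₁ : Type*} [AddCommGroup V₁] [Module F V₁]
    (A : BilinForm F V₁) {k : ℕ} (z : Fin k → F) (j : Fin k) :
    z j ∈ VSet (oplus A (blocks z)) := by
  have h := mem_vset_core A z 0 (fun l => if l = j then 1 else 0)
  have hs : (∑ l, z l * (if l = j then (1:F) else 0) ^ 2) = z j := by
    rw [Finset.sum_eq_single j]
    · simp
    · intro b _ hb; simp [hb]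
    · intro hj; exact absurd (Finset.mem_univ j) hj
  rw [hs] at h
  simpa using h

/-- The main matching lemma: two block-lists over the same ambient form with equal value
sets give isometric forms. -/
lemma match_core [CharP F 2] :
    ∀ (k : ℕ) {W : Type uF} [AddCommGroup W] [Module F W]
      (A : BilinForm F W) (hA : A.IsSymm) (z z' : Fin k → F),
      VSet (oplus A (blocks z)) = VSet (oplus A (blocks z')) →
      Isom (oplus A (blocks z)) (oplus A (blocks z')) := by
  intro k
  induction k with
  | zero =>
    intro W _ _ A hA z z' _
    have : z = z' := funext fun i => i.elim0
    rw [this]; exact Isom.refl _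
  | succ k IH =>
    intro W iW mW A hA z0 z0' hVS0
    obtain ⟨z, hzred, hziso⟩ := reduce hA z0
    obtain ⟨z', hz'red, hz'iso⟩ := reduce hA z0'
    have hVS : VSet (oplus A (blocks z)) = VSet (oplus A (blocks z')) := by
      rw [← hziso.vset_eq, ← hz'iso.vset_eq]; exact hVS0
    suffices h : Isom (oplus A (blocks z)) (oplus A (blocks z')) by
      exact (hziso.trans h).trans hz'iso.symm
    by_cases hz'0 : ∀ j, z' j = 0
    · have hz0' : ∀ i, z i = 0 := by
        intro i
        by_contra hne
        rcases hzred i with h0 | hnmem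
        · exact hne h0
        apply hnmem
        have hv : z i ∈ VSet (oplus A (blocks z')) := by
          rw [← hVS]; exact mem_vset_core_self A z i
        obtain ⟨u, t, hu⟩ := vset_core_elim hv
        have hAu : z i = A u u := by
          rw [hu]
          have : ∑ l, z' l * t l ^ 2 = 0 :=
            Finset.sum_eq_zero fun l _ => by rw [hz'0 l]; ring
          rw [this, add_zero]
        rw [hAu]
        exact mem_vset_amb A _ u
      have : z = z' := funext fun i => (hz0' i).trans (hz'0 i).symm
      rw [this]; exact Isom.refl _
    · push_neg at hz'0
      obtain ⟨j, hj⟩ := hz'0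
      -- z'-side
      have hchain' := isom_slot A z' j
      have hnr : z' j ∉ VSet (oplus A (blocks (Fin.tail (z' ∘ Equiv.swap 0 j)))) := by
        rcases hz'red j with h0 | hnmem
        · exact absurd h0 hj
        rw [vset_slot_aux hA z' j]; exact hnmem
      have hy'v : z' j ∈ VSet (oplus A (blocks z)) := by
        rw [hVS]; exact mem_vset_core_self A z' j
      obtain ⟨u, t, hy'⟩ := vset_core_elim hy'v
      have hex : ∃ i, z i ≠ 0 ∧ t i ≠ 0 := by
        by_contra hno
        push_neg at hno
        apply hnr
        have hsum : ∑ l, z l * t l ^ 2 = 0 := Finset.sum_eq_zero fun l _ => by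
          by_cases h : z l = 0
          · rw [h]; ring
          · rw [hno l h]; ring
        have hA' : z' j = A u u := by rw [hy', hsum, add_zero]
        rw [hA']
        exact mem_vset_amb A _ u
      obtain ⟨i, hzi, hti⟩ := hex
      -- z-side chain
      have hAmb : (oplus A (blocks (Fin.tail (z ∘ Equiv.swap 0 i)))).IsSymm :=
        oplus_isSymm hA (blocks_isSymm _)
      have step1 := isom_slot A z i
      have step2 : Isom
          (oplus (oplus A (blocks (Fin.tail (z ∘ Equiv.swap 0 i)))) (block1 (z i)))
          (oplus (oplus A (blocks (Fin.tail (z ∘ Equiv.swap 0 i))))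
            (block1 (t i ^ 2 * z i))) :=
        (Isom.refl _).oplus_congr (isom_block1_scale hti (z i))
      have hQw : (oplus A (blocks (Fin.tail (z ∘ Equiv.swap 0 i))))
            (u, fun l => ((0:F), t (Equiv.swap 0 i l.succ)))
            (u, fun l => ((0:F), t (Equiv.swap 0 i l.succ)))
          = A u u + (∑ l, z l * t l ^ 2 - z i * t i ^ 2) := by
        rw [qcore]
        congr 1
        have h1 : ∑ l : Fin (k+1), (z (Equiv.swap 0 i l) * t (Equiv.swap 0 i l) ^ 2)
            = ∑ l, z l * t l ^ 2 :=
          Equiv.sum_comp (Equiv.swap 0 i) (fun l => z l * t l ^ 2)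
        have h2 : ∑ l : Fin (k+1), (z (Equiv.swap 0 i l) * t (Equiv.swap 0 i l) ^ 2)
            = z (Equiv.swap 0 i 0) * t (Equiv.swap 0 i 0) ^ 2
              + ∑ l : Fin k, z (Equiv.swap 0 i l.succ) * t (Equiv.swap 0 i l.succ) ^ 2 :=
          Fin.sum_univ_succ _
        rw [Equiv.swap_apply_left] at h2
        have hgoal : ∑ l : Fin k, Fin.tail (z ∘ Equiv.swap 0 i) l
              * ((0:F), t (Equiv.swap 0 i l.succ)).2 ^ 2
            = ∑ l : Fin k, z (Equiv.swap 0 i l.succ) * t (Equiv.swap 0 i l.succ) ^ 2 := by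
          refine Finset.sum_congr rfl fun l _ => ?_
          rfl
        rw [hgoal]
        linear_combination h1 - h2
      have hm1 := isom_m1 hAmb
        (u, fun l => ((0:F), t (Equiv.swap 0 i l.succ))) (z' j)
      have key : z' j + (oplus A (blocks (Fin.tail (z ∘ Equiv.swap 0 i))))
            (u, fun l => ((0:F), t (Equiv.swap 0 i l.succ)))
            (u, fun l => ((0:F), t (Equiv.swap 0 i l.succ)))
          = t i ^ 2 * z i := by
        rw [hQw]
        have hc : ∀ a : F, a + a = 0 := fun a => CharTwo.add_self_eq_zero a
        linear_combination hy' + hc (A u u) + hc (∑ l, z l * t l ^ 2)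
          - hc (z i * t i ^ 2)
      rw [key] at hm1
      have chainz : Isom (oplus A (blocks z))
          (oplus (oplus A (blocks (Fin.tail (z ∘ Equiv.swap 0 i)))) (block1 (z' j))) :=
        (step1.trans step2).trans hm1
      -- shuffle both sides so that the ambient is A ⊕ block1 (z' j)
      have shuffle : ∀ {k' : ℕ} (w : Fin k' → F),
          Isom (oplus (oplus A (blocks w)) (block1 (z' j)))
            (oplus (oplus A (block1 (z' j))) (blocks w)) := by
        intro k' w
        refine (isom_oplus_assoc _ _ _).trans ?_
        refine ((Isom.refl A).oplus_congr (isom_oplus_comm _ _)).trans ?_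
        exact (isom_oplus_assoc _ _ _).symm
      have hA2 : (oplus A (block1 (z' j))).IsSymm := oplus_isSymm hA (block1_isSymm _)
      have hVS2 : VSet (oplus (oplus A (block1 (z' j)))
            (blocks (Fin.tail (z ∘ Equiv.swap 0 i))))
          = VSet (oplus (oplus A (block1 (z' j)))
            (blocks (Fin.tail (z' ∘ Equiv.swap 0 j)))) := by
        rw [← (shuffle (Fin.tail (z ∘ Equiv.swap 0 i))).vset_eq,
            ← (shuffle (Fin.tail (z' ∘ Equiv.swap 0 j))).vset_eq,
            ← chainz.vset_eq, ← hchain'.vset_eq]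
        exact hVS
      have hrec := IH (oplus A (block1 (z' j))) hA2
        (Fin.tail (z ∘ Equiv.swap 0 i)) (Fin.tail (z' ∘ Equiv.swap 0 j)) hVS2
      exact ((chainz.trans (shuffle _)).trans hrec).trans
        ((hchain'.trans (shuffle _)).symm)

end MatchMain

section Decomp

variable {V V₁ V₂ : Type*} [AddCommGroup V] [Module F V]
  [AddCommGroup V₁] [Module F V₁] [AddCommGroup V₂] [Module F V₂]

/-- transport of a form along a linear equivalence -/
def push (e : V₁ ≃ₗ[F] V₂) (β : BilinForm F V₁) : BilinForm F V₂ :=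
  LinearMap.mk₂ F (fun x y => β (e.symm x) (e.symm y))
    (by intros; simp) (by intros; simp) (by intros; simp) (by intros; simp)

@[simp] lemma push_apply (e : V₁ ≃ₗ[F] V₂) (β : BilinForm F V₁) (x y : V₂) :
    push e β x y = β (e.symm x) (e.symm y) := rfl

lemma isom_push (e : V₁ ≃ₗ[F] V₂) (β : BilinForm F V₁) : Isom β (push e β) :=
  ⟨e, fun x y => by simp⟩

lemma push_isSymm (e : V₁ ≃ₗ[F] V₂) {β : BilinForm F V₁} (h : β.IsSymm) :
    (push e β).IsSymm := ⟨fun x y => by simpa using h.eq (e.symm x) (e.symm y)⟩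

lemma push_aniso (e : V₁ ≃ₗ[F] V₂) {β : BilinForm F V₁} (h : Aniso β) :
    Aniso (push e β) := by
  intro v hv
  have := h (e.symm v) hv
  have h2 := congrArg e this
  simpa using h2

lemma restrict_isSymm {β : BilinForm F V} (hβ : β.IsSymm) (W : Submodule F V) :
    (β.restrict W).IsSymm := by
  refine ⟨fun x y => ?_⟩
  simpa using hβ.eq x.1 y.1

/-- orthogonal splitting along complementary orthogonal submodules -/
lemma isom_splitform {β : BilinForm F V} (hβ : β.IsSymm) {P Q : Submodule F V}
    (h : IsCompl P Q) (horth : ∀ p ∈ P, ∀ q ∈ Q, β p q = 0) :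
    Isom β (oplus (β.restrict P) (β.restrict Q)) := by
  refine Isom.symm ⟨Submodule.prodEquivOfIsCompl P Q h, fun x y => ?_⟩
  have he : ∀ w : P × Q, (Submodule.prodEquivOfIsCompl P Q h) w = w.1.1 + w.2.1 := by
    intro w; rfl
  rw [he x, he y]
  simp only [map_add, LinearMap.add_apply, oplus_apply, LinearMap.BilinForm.restrict_apply]
  have h1 : β x.1.1 y.2.1 = 0 := horth _ x.1.2 _ y.2.2
  have h2 : β x.2.1 y.1.1 = 0 := by
    rw [← symm_eq hβ]; exact horth _ y.1.2 _ x.2.2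
  rw [h1, h2]
  simp [LinearMap.domRestrict_apply]

/-- a form which vanishes identically is isometric to the zero form on any equivalent space -/
lemma isom_zeroform {β : BilinForm F V₁} (hz : ∀ x y, β x y = 0) (e : V₁ ≃ₗ[F] V₂) :
    Isom β (0 : BilinForm F V₂) :=
  ⟨e, fun x y => by simp [hz]⟩

/-- splitting off a metabolic plane spanned by an isotropic `v` and a partner `w` -/
lemma plane_split [CharP F 2] {β : BilinForm F V} (hβ : β.IsSymm) {v w : V}
    (hv : β v v = 0) (hvw : β v w = 1) :
    ∃ P : Submodule F V, Isom (β.restrict P) (block1 (β w w)) ∧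
      Module.finrank F P = 2 ∧ (β.restrict P).Nondegenerate := by
  have hwv : β w v = 1 := by rw [← symm_eq hβ]; exact hvw
  set z := β w w with hzdef
  set P := Submodule.span F {v, w} with hPdef
  have hvP : v ∈ P := Submodule.subset_span (by simp)
  have hwP : w ∈ P := Submodule.subset_span (by simp)
  -- linear maps back and forth
  have hcoords : ∀ (a b : F), β (a • v + b • w) v = b ∧ β (a • v + b • w) w = a + b * z := by
    intro a b
    constructor
    · simp only [map_add, map_smul, LinearMap.add_apply, LinearMap.smul_apply, smul_eq_mul,
        hv, hwv]
      ring
    · simp only [map_add, map_smul, LinearMap.add_apply, LinearMap.smul_apply, smul_eq_mul,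
        hvw]
      ring
  set f : F × F →ₗ[F] P :=
    { toFun := fun ab => ⟨ab.1 • v + ab.2 • w, add_mem (P.smul_mem _ hvP) (P.smul_mem _ hwP)⟩
      map_add' := by
        intro p q
        apply Subtype.ext
        show (p.1 + q.1) • v + (p.2 + q.2) • w = (p.1 • v + p.2 • w) + (q.1 • v + q.2 • w)
        rw [add_smul, add_smul]; abel
      map_smul' := by
        intro c p
        apply Subtype.ext
        show (c * p.1) • v + (c * p.2) • w = c • (p.1 • v + p.2 • w)
        rw [smul_add, mul_smul, mul_smul] } with hfdef
  set g : P →ₗ[F] F × F :=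
    { toFun := fun x => (β x.1 w + z * β x.1 v, β x.1 v)
      map_add' := by
        intro p q
        show (β (p.1 + q.1) w + z * β (p.1 + q.1) v, β (p.1 + q.1) v) = _
        simp only [map_add, LinearMap.add_apply]
        ext <;> (show _ = _) <;> simp <;> ring
      map_smul' := by
        intro c p
        show (β (c • p.1) w + z * β (c • p.1) v, β (c • p.1) v) = _
        simp only [map_smul, LinearMap.smul_apply, smul_eq_mul]
        ext <;> (show _ = _) <;> simp <;> ring } with hgdef
  have hchar : ∀ a : F, a + a = 0 := fun a => CharTwo.add_self_eq_zero a
  have hgf : ∀ ab : F × F, g (f ab) = ab := by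
    rintro ⟨a, b⟩
    show (β (a • v + b • w) w + z * β (a • v + b • w) v, β (a • v + b • w) v) = (a, b)
    obtain ⟨h1, h2⟩ := hcoords a b
    rw [h1, h2]
    ext
    · show a + b * z + z * b = a
      linear_combination b * hchar z
    · rfl
  have hfg : ∀ x : P, f (g x) = x := by
    intro x
    obtain ⟨a, b, hab⟩ := Submodule.mem_span_pair.mp x.2
    have hx : x = f (a, b) := by
      apply Subtype.ext
      exact hab.symm
    rw [hx, hgf]
  set Efp : (F × F) ≃ₗ[F] P := LinearEquiv.ofLinear f g
    (by apply LinearMap.ext; intro x; simp [hfg x])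
    (by apply LinearMap.ext; intro x; simp [hgf x]) with hEdef
  have hform : ∀ p q : F × F, (β.restrict P) (Efp p) (Efp q) = block1 z p q := by
    rintro ⟨a, b⟩ ⟨a', b'⟩
    show β (a • v + b • w) (a' • v + b' • w) = a * b' + b * a' + z * b * b'
    simp only [map_add, map_smul, LinearMap.add_apply, LinearMap.smul_apply, smul_eq_mul,
      hv, hvw, hwv]
    ring
  refine ⟨P, ⟨Efp.symm, fun x y => ?_⟩, ?_, ?_⟩
  · rw [← hform (Efp.symm x) (Efp.symm y)]
    simp
  · rw [← Efp.finrank_eq]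
    simp
  · refine (LinearMap.IsRefl.nondegenerate_iff_separatingLeft (restrict_isSymm hβ P).isRefl).mpr ?_
    intro x hx
    have h1 := hx ⟨v, hvP⟩
    have h2 := hx ⟨w, hwP⟩
    obtain ⟨a, b, hab⟩ := Submodule.mem_span_pair.mp x.2
    have hbv : β x.1 v = b := by rw [← hab]; exact (hcoords a b).1
    have hbw : β x.1 w = a + b * z := by rw [← hab]; exact (hcoords a b).2
    have hb : b = 0 := by
      have : β x.1 v = 0 := h1
      rwa [hbv] at this
    have ha : a = 0 := by
      have : β x.1 w = 0 := h2
      rw [hbw, hb] at this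
      simpa using this
    apply Subtype.ext
    rw [← hab, ha, hb]
    simp

/-- The decomposition theorem: every symmetric bilinear form over a field of
characteristic 2 decomposes as anisotropic ⊥ metabolic blocks ⊥ zero. -/
theorem decomp [CharP F 2] (n : ℕ) :
    ∀ {V : Type*} [AddCommGroup V] [Module F V] [FiniteDimensional F V]
      (β : BilinForm F V), β.IsSymm → Module.finrank F V = n →
      ∃ (m k r : ℕ) (βU : BilinForm F (Fin m → F)) (z : Fin k → F),
        βU.IsSymm ∧ Aniso βU ∧
        Isom β (oplus (oplus βU (blocks z)) (0 : BilinForm F (Fin r → F))) := by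
  induction n using Nat.strong_induction_on with
  | _ n IH =>
  intro V iV mV fV β hβ hrank
  by_cases hiso : ∃ v, β v v = 0 ∧ β v ≠ 0
  · -- split off a metabolic plane
    obtain ⟨v, hv, hv2⟩ := hiso
    have hw : ∃ w, β v w ≠ 0 := by
      by_contra hno
      push_neg at hno
      exact hv2 (LinearMap.ext hno)
    obtain ⟨w0, hw0⟩ := hw
    set w := (β v w0)⁻¹ • w0 with hwdef
    have hvw : β v w = 1 := by
      rw [hwdef]
      simp only [map_smul, smul_eq_mul]
      exact inv_mul_cancel₀ hw0
    obtain ⟨P, hPiso, hPrank, hPnondeg⟩ := plane_split hβ hv hvw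
    have hcompl : IsCompl P (β.orthogonal P) :=
      LinearMap.BilinForm.isCompl_orthogonal_of_restrict_nondegenerate hβ.isRefl hPnondeg
    have horth : ∀ p ∈ P, ∀ q ∈ β.orthogonal P, β p q = 0 := by
      intro p hp q hq
      exact hq p hp
    have hsplit := isom_splitform hβ hcompl horth
    have hrk : Module.finrank F (β.orthogonal P) < n := by
      have := Submodule.finrank_add_eq_of_isCompl hcompl
      rw [hrank, hPrank] at this
      omega
    obtain ⟨m, k, r, βU, z', hUsymm, hUaniso, hQiso⟩ :=
      IH _ hrk (β.restrict (β.orthogonal P)) (restrict_isSymm hβ _) rfl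
    refine ⟨m, k + 1, r, βU, Fin.cons (β w w) z', hUsymm, hUaniso, ?_⟩
    -- chain everything
    have c1 : Isom β (oplus (block1 (β w w))
        (oplus (oplus βU (blocks z')) (0 : BilinForm F (Fin r → F)))) :=
      hsplit.trans (hPiso.oplus_congr hQiso)
    refine c1.trans ?_
    -- shuffle
    refine (isom_oplus_comm _ _).trans ?_
    refine (isom_oplus_assoc _ _ _).trans ?_
    refine ((Isom.refl _).oplus_congr (isom_oplus_comm _ _)).trans ?_
    refine (isom_oplus_assoc _ _ _).symm.trans ?_
    refine Isom.oplus_congr ?_ (Isom.refl _)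
    -- oplus (oplus βU (blocks z')) (block1 (β w w)) ≅ oplus βU (blocks (cons (βww) z'))
    have hpeel := isom_peel βU (Fin.cons (β w w) z' : Fin (k+1) → F)
    rw [Fin.tail_cons, Fin.cons_zero] at hpeel
    exact hpeel.symm
  · -- no isotropic vector outside the radical
    push_neg at hiso
    obtain ⟨U, hU⟩ := Submodule.exists_isCompl (LinearMap.ker β)
    have horth : ∀ p ∈ U, ∀ q ∈ LinearMap.ker β, β p q = 0 := by
      intro p hp q hq
      rw [← symm_eq hβ]
      rw [LinearMap.mem_ker] at hq
      rw [hq]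
      rfl
    have hsplit := isom_splitform hβ hU.symm horth
    have haniso : Aniso (β.restrict U) := by
      intro u hu
      have h0 : β u.1 = 0 := hiso u.1 hu
      have : u.1 ∈ LinearMap.ker β ⊓ U := ⟨LinearMap.mem_ker.mpr h0, u.2⟩
      rw [hU.inf_eq_bot] at this
      exact Subtype.ext this
    set eU := (Module.finBasis F U).equivFun with heUdef
    set βU := push eU (β.restrict U) with hbUdef
    have hker0 : ∀ x y : (LinearMap.ker β), (β.restrict (LinearMap.ker β)) x y = 0 := by
      intro x y
      have h0 : β x.1 = 0 := LinearMap.mem_ker.mp x.2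
      show β x.1 y.1 = 0
      rw [h0]
      rfl
    refine ⟨Module.finrank F U, 0, Module.finrank F (LinearMap.ker β), βU,
      fun i => i.elim0, push_isSymm eU (restrict_isSymm hβ U), push_aniso eU haniso, ?_⟩
    refine hsplit.trans ?_
    refine Isom.oplus_congr ?_ (isom_zeroform hker0 (Module.finBasis F _).equivFun)
    refine (isom_push eU (β.restrict U)).trans ?_
    exact isom_oplus_subsingleton_right βU (blocks fun i => i.elim0)

end Decomp

section Kcond

variable {V V₁ V₂ : Type*} [AddCommGroup V] [Module F V]
  [AddCommGroup V₁] [Module F V₁] [AddCommGroup V₂] [Module F V₂]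

/-- The orthogonal complement (as a set) of the set of isotropic vectors. -/
def VP (β : BilinForm F V) : Set V := {x | ∀ v, β v v = 0 → β v x = 0}

/-- The key condition: a linear endomorphism which on `VP` scales `q` by `c` and is
self-adjoint, together with the stability of the value set under multiplication by `c`. -/
def Kcond (β : BilinForm F V) (c : F) : Prop :=
  (∀ v, ∃ w, c * β v v = β w w) ∧
  ∃ σ : V →ₗ[F] V,
    (∀ x ∈ VP β, σ x ∈ VP β) ∧
    (∀ x ∈ VP β, β (σ x) (σ x) = c * β x x) ∧
    (∀ x ∈ VP β, ∀ y ∈ VP β, β (σ x) y = β x (σ y))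

lemma vp_add {β : BilinForm F V} {x y : V} (hx : x ∈ VP β) (hy : y ∈ VP β) :
    x + y ∈ VP β := fun v hv => by
  rw [map_add, hx v hv, hy v hv, add_zero]

lemma kcond_zero (β : BilinForm F V) : Kcond β 0 :=
  ⟨fun v => ⟨0, by simp⟩, 0, fun x _ v hv => by simp,
    fun x _ => by simp, fun x _ y _ => by simp⟩

lemma kcond_add [CharP F 2] {β : BilinForm F V} (hβ : β.IsSymm) {c d : F}
    (hc : Kcond β c) (hd : Kcond β d) : Kcond β (c + d) := by
  obtain ⟨hst1, σc, hc3, hc1, hc2⟩ := hc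
  obtain ⟨hst2, σd, hd3, hd1, hd2⟩ := hd
  refine ⟨fun v => ?_, σc + σd, fun x hx => vp_add (hc3 x hx) (hd3 x hx),
    fun x hx => ?_, fun x hx y hy => ?_⟩
  · obtain ⟨w1, hw1⟩ := hst1 v
    obtain ⟨w2, hw2⟩ := hst2 v
    exact ⟨w1 + w2, by rw [add_mul, hw1, hw2, qadd hβ]⟩
  · show β (σc x + σd x) (σc x + σd x) = _
    rw [qadd hβ, hc1 x hx, hd1 x hx, add_mul]
  · show β (σc x + σd x) y = β x (σc y + σd y)
    simp only [map_add, LinearMap.add_apply]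
    rw [hc2 x hx y hy, hd2 x hx y hy]

lemma kcond_mul [CharP F 2] {β : BilinForm F V} (hβ : β.IsSymm) {c d : F}
    (hc : Kcond β c) (hd : Kcond β d) : Kcond β (c * d) := by
  obtain ⟨hst1, σc, hc3, hc1, hc2⟩ := hc
  obtain ⟨hst2, σd, hd3, hd1, hd2⟩ := hd
  refine ⟨fun v => ?_, σc ∘ₗ σd, fun x hx => hc3 _ (hd3 x hx),
    fun x hx => ?_, fun x hx y hy => ?_⟩
  · obtain ⟨w2, hw2⟩ := hst2 v
    obtain ⟨w1, hw1⟩ := hst1 w2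
    exact ⟨w1, by rw [mul_assoc, hw2, hw1]⟩
  · show β (σc (σd x)) (σc (σd x)) = _
    rw [hc1 _ (hd3 x hx), hd1 x hx]
    ring
  · show β (σc (σd x)) y = β x (σc (σd y))
    rw [hc2 _ (hd3 x hx) y hy, hd2 x hx _ (hc3 y hy)]
    -- now β x (σd (σc y)) = β x (σc (σd y))
    have hww : β (σd (σc y) + σc (σd y)) (σd (σc y) + σc (σd y)) = 0 := by
      rw [qadd hβ, hd1 _ (hc3 y hy), hc1 _ (hd3 y hy), hc1 y hy, hd1 y hy]
      rw [show d * (c * β y y) + c * (d * β y y)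
          = c * (d * β y y) + c * (d * β y y) by ring]
      exact CharTwo.add_self_eq_zero _
    have hx0 : β (σd (σc y) + σc (σd y)) x = 0 := hx _ hww
    have hx0' : β x (σd (σc y)) + β x (σc (σd y)) = 0 := by
      have h' : β x (σd (σc y) + σc (σd y)) = 0 := by
        rw [symm_eq hβ]; exact hx0
      rwa [map_add] at h'
    exact char2_eq_of_add_eq_zero hx0'

lemma kcond_transport {β₁ : BilinForm F V₁} {β₂ : BilinForm F V₂} (h : Isom β₁ β₂)
    {c : F} (hK : Kcond β₁ c) : Kcond β₂ c := by
  obtain ⟨e, he⟩ := h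
  obtain ⟨hst, σ, h3, h1, h2⟩ := hK
  have hq : ∀ x, β₂ x x = β₁ (e.symm x) (e.symm x) := by
    intro x
    rw [← he]
    simp
  have hb : ∀ x y, β₂ x y = β₁ (e.symm x) (e.symm y) := by
    intro x y
    rw [← he]
    simp
  have hVP : ∀ x, x ∈ VP β₂ → e.symm x ∈ VP β₁ := by
    intro x hx v hv
    have := hx (e v) (by rw [he]; exact hv)
    rw [hb (e v) x] at this
    simpa using this
  have hVP' : ∀ x, x ∈ VP β₁ → e x ∈ VP β₂ := by
    intro x hx v hv
    rw [hb]
    simp only [LinearEquiv.symm_apply_apply]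
    exact hx (e.symm v) (by rw [hq] at hv; exact hv)
  refine ⟨fun v => ?_, e.toLinearMap ∘ₗ σ ∘ₗ e.symm.toLinearMap, ?_, ?_, ?_⟩
  · obtain ⟨w, hw⟩ := hst (e.symm v)
    exact ⟨e w, by rw [hq v, hw, he]⟩
  · intro x hx
    show e (σ (e.symm x)) ∈ VP β₂
    exact hVP' _ (h3 _ (hVP x hx))
  · intro x hx
    show β₂ (e (σ (e.symm x))) (e (σ (e.symm x))) = _
    rw [he, h1 _ (hVP x hx), hq]
  · intro x hx y hy
    show β₂ (e (σ (e.symm x))) y = β₂ x (e (σ (e.symm y)))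
    rw [hb, hb]
    simp only [LinearEquiv.symm_apply_apply]
    exact h2 _ (hVP x hx) _ (hVP y hy)

/-- Kcond passes from `γ ⊥ 0` to `γ`. -/
lemma kcond_core_of_full {W : Type*} [AddCommGroup W] [Module F W] {γ : BilinForm F W}
    {r : ℕ} {c : F} (hK : Kcond (oplus γ (0 : BilinForm F (Fin r → F))) c) :
    Kcond γ c := by
  obtain ⟨hst, σ, h3, h1, h2⟩ := hK
  have hqfull : ∀ (a : W) (b : Fin r → F),
      (oplus γ (0 : BilinForm F (Fin r → F))) (a, b) (a, b) = γ a a := by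
    intro a b; simp
  have claim1 : ∀ x : W, x ∈ VP γ → ((x, 0) : W × (Fin r → F)) ∈ VP (oplus γ 0) := by
    rintro x hx ⟨v1, v2⟩ hv
    rw [hqfull] at hv
    show γ v1 x + (0 : BilinForm F (Fin r → F)) v2 0 = 0
    rw [hx v1 hv]
    simp
  have claim2 : ∀ p : W × (Fin r → F), p ∈ VP (oplus γ 0) → p.1 ∈ VP γ := by
    intro p hp v1 hv
    have := hp (v1, 0) (by rw [hqfull]; exact hv)
    simpa using this
  refine ⟨fun v => ?_, LinearMap.fst F W (Fin r → F) ∘ₗ σ ∘ₗ LinearMap.inl F W (Fin r → F),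
    ?_, ?_, ?_⟩
  · obtain ⟨w, hw⟩ := hst (v, 0)
    rw [hqfull] at hw
    refine ⟨w.1, ?_⟩
    rw [hw]
    obtain ⟨w1, w2⟩ := w
    rw [hqfull]
  · intro x hx
    exact claim2 _ (h3 (x, 0) (claim1 x hx))
  · intro x hx
    show γ (σ (x, 0)).1 (σ (x, 0)).1 = c * γ x x
    calc γ (σ (x, 0)).1 (σ (x, 0)).1
        = (oplus γ (0 : BilinForm F (Fin r → F))) (σ (x,0)) (σ (x,0)) := (hqfull _ _).symm
      _ = c * ((oplus γ (0 : BilinForm F (Fin r → F))) (x,0) (x,0)) := h1 (x, 0) (claim1 x hx)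
      _ = c * γ x x := by rw [hqfull]
  · intro x hx y hy
    show γ (σ (x, 0)).1 y = γ x (σ (y, 0)).1
    have h := h2 (x, 0) (claim1 x hx) (y, 0) (claim1 y hy)
    have e1 : (oplus γ (0 : BilinForm F (Fin r → F))) (σ (x, 0)) (y, 0)
        = γ (σ (x, 0)).1 y := by
      show γ (σ (x, 0)).1 y + (0 : BilinForm F (Fin r → F)) (σ (x,0)).2 0 = _
      simp
    have e2 : (oplus γ (0 : BilinForm F (Fin r → F))) (x, 0) (σ (y, 0))
        = γ x (σ (y, 0)).1 := by
      show γ x (σ (y, 0)).1 + (0 : BilinForm F (Fin r → F)) 0 (σ (y,0)).2 = _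
      simp
    rw [← e1, ← e2, h]

end Kcond

section Necessity

variable {V : Type*} [AddCommGroup V] [Module F V]

lemma char2_vec_eq (F : Type uF) [Field F] [CharP F 2] {W : Type*} [AddCommGroup W]
    [Module F W] {x y : W} (h : x + y = 0) : x = y := by
  have hx : x = -y := eq_neg_of_add_eq_zero_left h
  rw [hx, ← neg_one_smul F y, show (-1 : F) = 1 from CharTwo.neg_eq 1, one_smul]

lemma aniso_eq [CharP F 2] {W : Type*} [AddCommGroup W] [Module F W] {β : BilinForm F W}
    (hs : β.IsSymm) (ha : Aniso β) {x y : W} (h : β x x = β y y) : x = y :=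
  char2_vec_eq F (ha _ (by rw [qadd hs, h]; exact CharTwo.add_self_eq_zero _))

/-- Necessity: a similitude with factor `c` yields `Kcond β c`. -/
lemma kcond_of_similitude [CharP F 2] {β : BilinForm F V} (hβ : β.IsSymm) {c : F} (hc : c ≠ 0)
    (e : V ≃ₗ[F] V) (he : ∀ x y, c * β (e x) (e y) = β x y) : Kcond β c := by
  have hsim : ∀ x y, β (e.symm x) (e.symm y) = c * β x y := by
    intro x y
    have := he (e.symm x) (e.symm y)
    simp only [LinearEquiv.apply_symm_apply] at this
    exact this.symm
  have hVPs : ∀ x ∈ VP β, e.symm x ∈ VP β := by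
    intro x hx v hv
    have h1 : β v (e.symm x) = c * β (e v) x := by
      have := hsim (e v) x
      simpa using this
    rw [h1]
    have h2 : c * β (e v) (e v) = 0 := by rw [he]; exact hv
    have h3 : β (e v) (e v) = 0 := by
      rcases mul_eq_zero.mp h2 with h | h
      · exact absurd h hc
      · exact h
    rw [hx (e v) h3, mul_zero]
  refine ⟨fun v => ⟨e.symm v, (hsim v v).symm⟩, e.symm.toLinearMap, hVPs,
    fun x _ => hsim x x, fun x hx y hy => ?_⟩
  show β (e.symm x) y = β x (e.symm y)
  have key : c * β (e.symm x) y = β (e.symm (e.symm x)) (e.symm y) := (hsim (e.symm x) y).symm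
  have hn0 : β (e.symm (e.symm x) + c • x) (e.symm (e.symm x) + c • x) = 0 := by
    rw [qadd hβ, qsmul, hsim, hsim]
    rw [show c * (c * β x x) = c ^ 2 * β x x by ring]
    exact CharTwo.add_self_eq_zero _
  have hnperp : β (e.symm (e.symm x) + c • x) (e.symm y) = 0 := hVPs y hy _ hn0
  have hsplit : β (e.symm (e.symm x)) (e.symm y)
      = β (e.symm (e.symm x) + c • x) (e.symm y) + c * β x (e.symm y) := by
    simp only [map_add, LinearMap.add_apply, map_smul, LinearMap.smul_apply, smul_eq_mul]
    linear_combination - CharTwo.add_self_eq_zero (c * β x (e.symm y))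
  rw [hsplit, hnperp, zero_add] at key
  exact mul_left_cancel₀ hc key

/-- Extraction of the canonical similitude on the anisotropic part. -/
lemma sigma_equiv [CharP F 2] {m k : ℕ} {βU : BilinForm F (Fin m → F)} (hUs : βU.IsSymm)
    (hUa : Aniso βU) {y : Fin k → F} (hred : Reduced βU y) {c : F} (hc : c ≠ 0)
    (hK : Kcond (oplus βU (blocks y)) c) :
    ∃ gU : (Fin m → F) ≃ₗ[F] (Fin m → F), ∀ u u', βU (gU u) (gU u') = c * βU u u' := by
  classical
  obtain ⟨hst, σ, h3, h1, h2⟩ := hK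
  have vzchar : ∀ (u : Fin m → F) (p : Fin k → F × F),
      (oplus βU (blocks y)) (u, p) (u, p) = 0 →
      u = 0 ∧ ∀ i, y i ≠ 0 → (p i).2 = 0 := by
    intro u p hq
    rw [qcore] at hq
    have hterm : ∀ i, y i ≠ 0 → (p i).2 = 0 := by
      intro i hyi
      by_contra hs
      rcases hred i with h0 | hnm
      · exact hyi h0
      apply hnm
      have hval := mem_vset_core βU (Function.update y i 0) ((p i).2⁻¹ • u)
          (fun j => (p i).2⁻¹ * (p j).2)
      have hexp : βU ((p i).2⁻¹ • u) ((p i).2⁻¹ • u)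
          + ∑ j, Function.update y i 0 j * ((p i).2⁻¹ * (p j).2) ^ 2 = y i := by
        rw [qsmul]
        have hupd : ∀ j, Function.update y i 0 j * ((p i).2⁻¹ * (p j).2) ^ 2
            = (p i).2⁻¹ ^ 2 * (Function.update y i 0 j * (p j).2 ^ 2) := fun j => by ring
        rw [Finset.sum_congr rfl (fun j _ => hupd j), ← Finset.mul_sum, ← mul_add]
        have hsum2 : ∑ j, Function.update y i 0 j * (p j).2 ^ 2
            = ∑ j, y j * (p j).2 ^ 2 - y i * (p i).2 ^ 2 := by
          rw [← Finset.add_sum_erase _ (fun j => y j * (p j).2 ^ 2) (Finset.mem_univ i),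
              ← Finset.add_sum_erase _
                (fun j => Function.update y i 0 j * (p j).2 ^ 2) (Finset.mem_univ i)]
          rw [Function.update_self]
          have heq : ∑ j ∈ Finset.univ.erase i, Function.update y i 0 j * (p j).2 ^ 2
              = ∑ j ∈ Finset.univ.erase i, y j * (p j).2 ^ 2 :=
            Finset.sum_congr rfl fun j hj => by
              rw [Function.update_of_ne (Finset.ne_of_mem_erase hj)]
          rw [heq]
          ring
        rw [hsum2]
        have hpi : (p i).2 ≠ 0 := hs
        field_simp
        linear_combination hq - CharTwo.add_self_eq_zero (y i * (p i).2 ^ 2)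
      rw [← hexp]
      exact hval
    refine ⟨hUa u ?_, hterm⟩
    have hz : ∑ j, y j * (p j).2 ^ 2 = 0 := Finset.sum_eq_zero fun j _ => by
      by_cases h0 : y j = 0
      · rw [h0]; ring
      · rw [hterm j h0]; ring
    rw [hz, add_zero] at hq
    exact hq
  have vpc : ∀ w ∈ VP (oplus βU (blocks y)), ∀ i, (w.2 i).2 = 0 := by
    intro w hw i
    have hgz : (oplus βU (blocks y))
        ((0 : Fin m → F), fun j => if j = i then ((1:F), (0:F)) else 0)
        ((0 : Fin m → F), fun j => if j = i then ((1:F), (0:F)) else 0) = 0 := by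
      rw [qcore]
      simp only [map_zero, LinearMap.zero_apply, zero_add]
      refine Finset.sum_eq_zero fun j _ => ?_
      by_cases h : j = i <;> simp [h]
    have hperp := hw _ hgz
    have hcomp : (oplus βU (blocks y))
        ((0 : Fin m → F), fun j => if j = i then ((1:F), (0:F)) else 0) w
        = (w.2 i).2 := by
      simp only [oplus_apply, blocks_apply, map_zero, LinearMap.zero_apply, zero_add]
      rw [Finset.sum_eq_single i]
      · simp
      · intro b _ hb; simp [hb]
      · intro h; exact absurd (Finset.mem_univ i) h
    rw [hcomp] at hperp
    exact hperp
  have hiota : ∀ u : Fin m → F,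
      ((u, 0) : (Fin m → F) × (Fin k → F × F)) ∈ VP (oplus βU (blocks y)) := by
    intro u v hv
    obtain ⟨hv1, _⟩ := vzchar v.1 v.2 hv
    show βU v.1 u + blocks y v.2 0 = 0
    rw [hv1]
    simp
  set σU : (Fin m → F) →ₗ[F] (Fin m → F) :=
    LinearMap.fst F _ _ ∘ₗ σ ∘ₗ LinearMap.inl F _ _ with hσUdef
  have hσUeq : ∀ u, σU u = (σ (u, 0)).1 := fun u => rfl
  have hq1 : ∀ u, βU (σU u) (σU u) = c * βU u u := by
    intro u
    have h := h1 (u, 0) (hiota u)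
    have hz2 : ∀ i, ((σ (u, 0)).2 i).2 = 0 := vpc _ (h3 (u, 0) (hiota u))
    have hL : (oplus βU (blocks y)) (σ (u, 0)) (σ (u, 0)) = βU (σU u) (σU u) := by
      have := qcore βU y (σ (u, 0)).1 (σ (u, 0)).2
      rw [this]
      rw [Finset.sum_eq_zero fun i _ => by rw [hz2 i]; ring, add_zero]
      rfl
    have hR : (oplus βU (blocks y)) (u, 0) (u, 0) = βU u u := by
      rw [qcore]
      simp
    rw [hL, hR] at h
    exact h
  have hadj : ∀ u u', βU (σU u) u' = βU u (σU u') := by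
    intro u u'
    have h := h2 (u, 0) (hiota u) (u', 0) (hiota u')
    have e1 : (oplus βU (blocks y)) (σ (u, 0)) (u', 0) = βU (σU u) u' := by
      show βU (σ (u, 0)).1 u' + blocks y (σ (u, 0)).2 0 = _
      simp [hσUeq]
    have e2 : (oplus βU (blocks y)) (u, 0) (σ (u', 0)) = βU u (σU u') := by
      show βU u (σ (u', 0)).1 + blocks y 0 (σ (u', 0)).2 = _
      simp [hσUeq]
    rw [e1, e2] at h
    exact h
  have hsq : ∀ u, σU (σU u) = c • u := by
    intro u
    apply aniso_eq hUs hUa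
    rw [hq1, hq1, qsmul]
    ring
  have hsim : ∀ u u', βU (σU u) (σU u') = c * βU u u' := by
    intro u u'
    rw [hadj, hsq]
    simp
  have hinj : Function.Injective σU := by
    intro a b hab
    have h2' : c • a = c • b := by rw [← hsq, ← hsq, hab]
    exact smul_right_injective _ hc h2'
  have hbij : Function.Bijective σU := ⟨hinj, (LinearMap.injective_iff_surjective).mp hinj⟩
  exact ⟨LinearEquiv.ofBijective σU hbij, fun u u' => by
    have := hsim u u'
    simpa using this⟩

end Necessity

section Fin2

variable [CharP F 2] {V : Type*} [AddCommGroup V] [Module F V]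

lemma qsum {β : BilinForm F V} (hβ : β.IsSymm) {ι : Type*} (s : Finset ι)
    (a : ι → F) (w : ι → V) :
    β (∑ i ∈ s, a i • w i) (∑ i ∈ s, a i • w i) = ∑ i ∈ s, (a i) ^ 2 * β (w i) (w i) := by
  classical
  induction s using Finset.induction with
  | empty => simp
  | insert a s hx ih =>
    rw [Finset.sum_insert hx, Finset.sum_insert hx, qadd hβ, qsmul, ih]

/-- The value set as a `F²`-submodule. -/
noncomputable def Qsub (β : BilinForm F V) (hβ : β.IsSymm) : Submodule ((frobenius F 2).fieldRange) F where
  carrier := VSet β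
  add_mem' := by
    rintro a b ⟨v, rfl⟩ ⟨w, rfl⟩
    exact ⟨v + w, qadd hβ v w⟩
  zero_mem' := ⟨0, by simp⟩
  smul_mem' := by
    rintro c x ⟨v, rfl⟩
    obtain ⟨t, ht⟩ := c.2
    refine ⟨t • v, ?_⟩
    show β (t • v) (t • v) = c • β v v
    rw [qsmul]
    have : (c : F) = t ^ 2 := by rw [← ht, frobenius_def]
    rw [show c • β v v = (c : F) * β v v from rfl, this]

lemma mem_qsub {β : BilinForm F V} (hβ : β.IsSymm) {x : F} :
    x ∈ Qsub β hβ ↔ x ∈ VSet β := Iff.rfl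

lemma qsub_fd [FiniteDimensional F V] (β : BilinForm F V) (hβ : β.IsSymm) :
    FiniteDimensional ((frobenius F 2).fieldRange) (Qsub β hβ) := by
  classical
  set b := Module.finBasis F V with hbdef
  have hle : Qsub β hβ ≤ Submodule.span ((frobenius F 2).fieldRange) (Set.range fun i => β (b i) (b i)) := by
    rintro x ⟨v, rfl⟩
    show β v v ∈ _
    have hvv : β v v = ∑ i, (b.repr v i) ^ 2 * β (b i) (b i) := by
      conv_lhs => rw [← b.sum_repr v]
      exact qsum hβ _ _ _
    rw [hvv]
    refine Submodule.sum_mem _ fun i _ => ?_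
    have hmem : (⟨(b.repr v i) ^ 2, ⟨b.repr v i, by rw [frobenius_def]⟩⟩ : ((frobenius F 2).fieldRange)) •
        β (b i) (b i) ∈ Submodule.span ((frobenius F 2).fieldRange) (Set.range fun i => β (b i) (b i)) :=
      Submodule.smul_mem _ _ (Submodule.subset_span ⟨i, rfl⟩)
    exact hmem
  haveI := FiniteDimensional.span_of_finite ((frobenius F 2).fieldRange) (Set.finite_range fun i => β (b i) (b i))
  exact Submodule.finiteDimensional_of_le hle

lemma stab_surj [FiniteDimensional F V] {β : BilinForm F V} (hβ : β.IsSymm)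
    {c : F} (hc : c ≠ 0) (h : ∀ v, ∃ w, c * β v v = β w w) :
    ∀ v, ∃ w, β v v = c * β w w := by
  haveI := qsub_fd β hβ
  have hμmem : ∀ x : Qsub β hβ, c * x.1 ∈ Qsub β hβ := by
    rintro ⟨x, hx⟩
    obtain ⟨v, hv⟩ := hx
    obtain ⟨w, hw⟩ := h v
    show c * x ∈ VSet β
    have : c * x = β w w := by rw [← hw]; rw [← hv]
    rw [this]
    exact ⟨w, rfl⟩
  set μ : Qsub β hβ →ₗ[((frobenius F 2).fieldRange)] Qsub β hβ :=
    { toFun := fun x => ⟨c * x.1, hμmem x⟩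
      map_add' := by
        intro x y
        apply Subtype.ext
        show c * (x.1 + y.1) = c * x.1 + c * y.1
        ring
      map_smul' := by
        intro k x
        apply Subtype.ext
        show c * ((k : F) * x.1) = (k : F) * (c * x.1)
        ring } with hμdef
  have hinj : Function.Injective μ := by
    intro x y hxy
    have : c * x.1 = c * y.1 := congrArg Subtype.val hxy
    exact Subtype.ext (mul_left_cancel₀ hc this)
  have hsurj := (LinearMap.injective_iff_surjective).mp hinj
  intro v
  obtain ⟨x, hx⟩ := hsurj ⟨β v v, ⟨v, rfl⟩⟩
  obtain ⟨w, hw⟩ := x.2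
  refine ⟨w, ?_⟩
  have h1 : c * x.1 = β v v := congrArg Subtype.val hx
  rw [← h1, ← hw]

end Fin2

section Suffice

variable [CharP F 2]

lemma vset_oplus_zero {W W' : Type*} [AddCommGroup W] [Module F W] [AddCommGroup W']
    [Module F W'] (γ : BilinForm F W) :
    VSet (oplus γ (0 : BilinForm F W')) = VSet γ := by
  ext x
  constructor
  · rintro ⟨⟨a, b⟩, rfl⟩
    refine ⟨a, ?_⟩
    show γ a a = (oplus γ (0 : BilinForm F W')) (a, b) (a, b)
    simp
  · rintro ⟨a, rfl⟩
    refine ⟨(a, 0), ?_⟩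
    show (oplus γ (0 : BilinForm F W')) (a, 0) (a, 0) = γ a a
    simp

/-- Sufficiency: Kcond implies the existence of a similitude. -/
theorem isom_smul_of_kcond {V : Type*} [AddCommGroup V] [Module F V] [FiniteDimensional F V]
    {β : BilinForm F V} (hβ : β.IsSymm) {c : F} (hc : c ≠ 0) (hK : Kcond β c) :
    Isom β (c • β) := by
  obtain ⟨m, k, r, βU, z0, hUs, hUa, hIso⟩ := decomp (Module.finrank F V) β hβ rfl
  obtain ⟨y, hyred, hyiso⟩ := reduce hUs z0
  have hIso2 : Isom β (oplus (oplus βU (blocks y)) (0 : BilinForm F (Fin r → F))) :=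
    hIso.trans (hyiso.oplus_congr (Isom.refl _))
  have hKm := kcond_transport hIso2 hK
  have hKcore : Kcond (oplus βU (blocks y)) c := kcond_core_of_full hKm
  obtain ⟨gU, hgU⟩ := sigma_equiv hUs hUa hyred hc hKcore
  have hstab := hK.1
  have hsurj := stab_surj hβ hc hstab
  have hVSβ : VSet β = VSet (oplus βU (blocks y)) := by
    rw [hIso2.vset_eq, vset_oplus_zero]
  -- value-set equality needed for the matching lemma
  have hVS : VSet (oplus βU (blocks (c • y))) = VSet (oplus βU (blocks y)) := by
    ext x
    constructor
    · intro hx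
      obtain ⟨u, t, rfl⟩ := vset_core_elim hx
      have hu2 : βU u u = c * βU (gU.symm u) (gU.symm u) := by
        have := hgU (gU.symm u) (gU.symm u)
        simp only [LinearEquiv.apply_symm_apply] at this
        exact this
      have hxc : βU u u + ∑ i, (c • y) i * t i ^ 2
          = c * (βU (gU.symm u) (gU.symm u) + ∑ i, y i * t i ^ 2) := by
        rw [hu2, mul_add, Finset.mul_sum]
        congr 1
        exact Finset.sum_congr rfl fun i _ => by
          show c * y i * t i ^ 2 = c * (y i * t i ^ 2)
          ring
      rw [hxc]
      -- c * (value) is a value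
      have hmem : βU (gU.symm u) (gU.symm u) + ∑ i, y i * t i ^ 2
          ∈ VSet (oplus βU (blocks y)) := mem_vset_core βU y _ t
      rw [← hVSβ] at hmem
      obtain ⟨v, hv⟩ := hmem
      obtain ⟨w, hw⟩ := hstab v
      have : c * (βU (gU.symm u) (gU.symm u) + ∑ i, y i * t i ^ 2) = β w w := by
        rw [← hw, ← hv]
      rw [this, hVSβ.symm]
      exact ⟨w, rfl⟩
    · intro hx
      have hx' : x ∈ VSet β := by rw [hVSβ]; exact hx
      obtain ⟨v, rfl⟩ := hx'
      obtain ⟨w, hw⟩ := hsurj v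
      have hwV : β w w ∈ VSet (oplus βU (blocks y)) := by
        rw [← hVSβ]; exact ⟨w, rfl⟩
      obtain ⟨u, t, hut⟩ := vset_core_elim hwV
      have hval : β v v = βU (gU u) (gU u) + ∑ i, (c • y) i * t i ^ 2 := by
        rw [hw, hut, hgU, mul_add, Finset.mul_sum]
        congr 1
        exact Finset.sum_congr rfl fun i _ => by
          show c * (y i * t i ^ 2) = c • y i * t i ^ 2
          show c * (y i * t i ^ 2) = c * y i * t i ^ 2
          ring
      show β v v ∈ VSet (oplus βU (blocks (c • y)))
      rw [hval]
      exact mem_vset_core βU (c • y) (gU u) t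
  have hmatch := match_core k βU hUs (c • y) y hVS
  have e1 : Isom (c • βU) βU := by
    refine ⟨gU, fun u u' => ?_⟩
    rw [hgU]
    rfl
  have e2 : Isom (c • blocks y) (blocks (c • y)) := isom_smul_blocks hc y
  have heq : c • (oplus (oplus βU (blocks y)) (0 : BilinForm F (Fin r → F)))
      = oplus (oplus (c • βU) (c • blocks y)) (0 : BilinForm F (Fin r → F)) := by
    rw [smul_oplus_eq, smul_oplus_eq, smul_zero]
  have chain : Isom (c • β) (oplus (oplus βU (blocks y)) (0 : BilinForm F (Fin r → F))) := by
    refine ((Isom.smul_congr c hIso2).trans (isom_of_eq heq)).trans ?_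
    refine ((e1.oplus_congr e2).oplus_congr (Isom.refl _)).trans ?_
    exact hmatch.oplus_congr (Isom.refl _)
  exact hIso2.trans chain.symm

end Suffice

section Glue

variable [CharP F 2] {V : Type*} [AddCommGroup V] [Module F V] {β : BilinForm F V}

lemma smul_beta (c : F) (β : BilinForm F V) (a b : V) : (c • β) a b = c * β a b := rfl

lemma simfac_iff {c : F} :
    c ∈ bilinSimFactors0 β ↔ c = 0 ∨ (c ≠ 0 ∧ ∃ e : V ≃ₗ[F] V,
      ∀ x y : V, c * β (e x) (e y) = β x y) := Iff.rfl

lemma zero_mem_simfac : (0 : F) ∈ bilinSimFactors0 β := Or.inl rfl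

lemma one_mem_simfac : (1 : F) ∈ bilinSimFactors0 β :=
  Or.inr ⟨one_ne_zero, LinearEquiv.refl F V, fun x y => by
    rw [smul_beta, one_mul]; rfl⟩

lemma sq_mem_simfac (t : F) : t ^ 2 ∈ bilinSimFactors0 β := by
  rcases eq_or_ne t 0 with rfl | ht
  · rw [show (0:F)^2 = 0 by ring]; exact zero_mem_simfac
  refine Or.inr ⟨pow_ne_zero 2 ht, LinearEquiv.smulOfNeZero F V t⁻¹ (inv_ne_zero ht),
    fun x y => ?_⟩
  rw [smul_beta]
  show t ^ 2 * β (t⁻¹ • x) (t⁻¹ • y) = β x y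
  simp only [map_smul, LinearMap.smul_apply, smul_eq_mul]
  field_simp

lemma mul_mem_simfac {a b : F} (ha : a ∈ bilinSimFactors0 β) (hb : b ∈ bilinSimFactors0 β) :
    a * b ∈ bilinSimFactors0 β := by
  rcases ha with ha | ⟨ha0, ea, hea⟩
  · rw [Set.mem_singleton_iff] at ha
    rw [ha, zero_mul]; exact zero_mem_simfac
  rcases hb with hb | ⟨hb0, eb, heb⟩
  · rw [Set.mem_singleton_iff] at hb
    rw [hb, mul_zero]; exact zero_mem_simfac
  refine Or.inr ⟨mul_ne_zero ha0 hb0, eb.trans ea, fun x y => ?_⟩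
  rw [smul_beta]
  show a * b * β (ea (eb x)) (ea (eb y)) = β x y
  have h1 : a * β (ea (eb x)) (ea (eb y)) = β (eb x) (eb y) := hea (eb x) (eb y)
  have h2 : b * β (eb x) (eb y) = β x y := heb x y
  calc a * b * β (ea (eb x)) (ea (eb y)) = b * (a * β (ea (eb x)) (ea (eb y))) := by ring
    _ = b * β (eb x) (eb y) := by rw [h1]
    _ = β x y := h2

lemma inv_mem_simfac {a : F} (ha : a ∈ bilinSimFactors0 β) : a⁻¹ ∈ bilinSimFactors0 β := by
  rcases ha with ha | ⟨ha0, e, he⟩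
  · rw [Set.mem_singleton_iff] at ha
    rw [ha, inv_zero]; exact zero_mem_simfac
  refine Or.inr ⟨inv_ne_zero ha0, e.symm, fun x y => ?_⟩
  rw [smul_beta]
  have h1 : a * β (e (e.symm x)) (e (e.symm y)) = β (e.symm x) (e.symm y) :=
    he (e.symm x) (e.symm y)
  simp only [LinearEquiv.apply_symm_apply] at h1
  rw [← h1]
  field_simp

lemma kcond_of_mem (hβ : β.IsSymm) {c : F} (h : c ∈ bilinSimFactors0 β) : Kcond β c := by
  rcases h with h0 | ⟨hne, e, he⟩
  · rw [Set.mem_singleton_iff] at h0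
    rw [h0]; exact kcond_zero β
  exact kcond_of_similitude hβ hne e he

lemma add_mem_simfac [FiniteDimensional F V] (hβ : β.IsSymm) {a b : F}
    (ha : a ∈ bilinSimFactors0 β) (hb : b ∈ bilinSimFactors0 β) :
    a + b ∈ bilinSimFactors0 β := by
  rcases eq_or_ne (a + b) 0 with h0 | hab
  · rw [h0]; exact zero_mem_simfac
  have hK : Kcond β (a + b) := kcond_add hβ (kcond_of_mem hβ ha) (kcond_of_mem hβ hb)
  exact Or.inr ⟨hab, isom_smul_of_kcond hβ hab hK⟩

lemma neg_mem_simfac {a : F} (ha : a ∈ bilinSimFactors0 β) : -a ∈ bilinSimFactors0 β := by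
  rw [CharTwo.neg_eq]; exact ha

lemma stab_of_mem {c : F} (hc : c ∈ bilinSimFactors0 β) (v : V) :
    c * β v v ∈ VSet β := by
  rcases hc with h0 | ⟨hne, e, he⟩
  · rw [Set.mem_singleton_iff] at h0
    rw [h0, zero_mul]; exact ⟨0, by simp⟩
  have := he (e.symm v) (e.symm v)
  simp only [LinearEquiv.apply_symm_apply, smul_beta] at this
  exact ⟨e.symm v, this.symm⟩

end Glue

end Stmt3

/-- for a symmetric bilinear form `β` over a field of characteristic 2, the set
`G_F^0(β)` is a subfield of `F` containing the field of squares `F²`; if `β` is not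
hyperbolic, it is a finite extension of `F²`. -/
theorem stmt_3 {F : Type*} [Field F] [CharP F 2]
    {V : Type*} [AddCommGroup V] [Module F V] [FiniteDimensional F V]
    (β : LinearMap.BilinForm F V) (hβ : β.IsSymm) :
    (∃ K : Subfield F, (K : Set F) = bilinSimFactors0 β ∧ ∀ x : F, x ^ 2 ∈ K) ∧
    ((∃ x : V, β x x ≠ 0) →
      ∃ W : Submodule (frobenius F 2).fieldRange F,
        (W : Set F) = bilinSimFactors0 β ∧
        FiniteDimensional (frobenius F 2).fieldRange W) := by
  classical
  constructor
  · set K : Subfield F :=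
      { carrier := bilinSimFactors0 β
        mul_mem' := fun ha hb => Stmt3.mul_mem_simfac ha hb
        one_mem' := Stmt3.one_mem_simfac
        add_mem' := fun ha hb => Stmt3.add_mem_simfac hβ ha hb
        zero_mem' := Stmt3.zero_mem_simfac
        neg_mem' := fun ha => Stmt3.neg_mem_simfac ha
        inv_mem' := fun a ha => Stmt3.inv_mem_simfac ha } with hK
    exact ⟨K, rfl, fun x => Stmt3.sq_mem_simfac x⟩
  · rintro ⟨x₀, hx₀⟩
    set W : Submodule (frobenius F 2).fieldRange F :=
      { carrier := bilinSimFactors0 β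
        add_mem' := fun ha hb => Stmt3.add_mem_simfac hβ ha hb
        zero_mem' := Stmt3.zero_mem_simfac
        smul_mem' := by
          rintro ⟨k, t, ht⟩ x hx
          show k * x ∈ bilinSimFactors0 β
          have hk : k = t ^ 2 := by rw [← ht, frobenius_def]
          rw [hk]
          exact Stmt3.mul_mem_simfac (Stmt3.sq_mem_simfac t) hx } with hWdef
    refine ⟨W, rfl, ?_⟩
    haveI hQfd : FiniteDimensional ((frobenius F 2).fieldRange) (Stmt3.Qsub β hβ) :=
      Stmt3.qsub_fd β hβ
    set ℓ : F →ₗ[(frobenius F 2).fieldRange] F :=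
      { toFun := fun x => β x₀ x₀ * x
        map_add' := fun x y => mul_add _ x y
        map_smul' := fun k x => by
          show β x₀ x₀ * ((k : F) * x) = (k : F) * (β x₀ x₀ * x)
          ring } with hℓdef
    set W' : Submodule (frobenius F 2).fieldRange F :=
      (Stmt3.Qsub β hβ).comap ℓ with hW'def
    have hle : W ≤ W' := by
      intro c hc
      show β x₀ x₀ * c ∈ Stmt3.Qsub β hβ
      rw [mul_comm]
      exact Stmt3.stab_of_mem hc x₀
    haveI hW'fd : FiniteDimensional ((frobenius F 2).fieldRange) W' := by
      set f : W' →ₗ[(frobenius F 2).fieldRange] (Stmt3.Qsub β hβ) :=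
        { toFun := fun x => ⟨β x₀ x₀ * x.1, x.2⟩
          map_add' := fun x y => Subtype.ext (by
            show β x₀ x₀ * (x.1 + y.1) = β x₀ x₀ * x.1 + β x₀ x₀ * y.1
            ring)
          map_smul' := fun k x => Subtype.ext (by
            show β x₀ x₀ * ((k : F) * x.1) = (k : F) * (β x₀ x₀ * x.1)
            ring) } with hfdef
      have hfinj : Function.Injective f := by
        intro x y hxy
        have h1 : β x₀ x₀ * x.1 = β x₀ x₀ * y.1 := congrArg Subtype.val hxy
        exact Subtype.ext (mul_left_cancel₀ hx₀ h1)
      exact FiniteDimensional.of_injective f hfinj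
    exact Submodule.finiteDimensional_of_le hle
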